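/- arXiv:2003.03693 — 2 statements merged into one kernel-verified Lean document; each statement's English description precedes it below -/
import Mathlib

section
/- Under Assumption 1, if there exists a nonnegative matrix Y with R_T(Y) ≥ 0 entrywise, then the fixed-point iterates X_0 = 0, S_T(X_{k+1}) = X_kᵀ B X_k − C satisfy X_k ≤ Y entrywise for all k ≥ 0. -/
open Matrix

/-- A real square matrix is a Z-matrix if all its off-diagonal entries are nonpositive. -/
def IsZMatrix {m : Type*} [Fintype m] [DecidableEq m] (A : Matrix m m ℝ) : Prop :=
  ∀ i j, i ≠ j → A i j ≤ 0

/-- A real square matrix is a nonsingular M-matrix if it can be written as `s • 1 - N`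
with `N` entrywise nonnegative and `s` strictly larger than the spectral radius of `N`
(i.e., every complex eigenvalue of `N` has modulus strictly less than `s`). -/
def IsNonsingMMatrix {m : Type*} [Fintype m] [DecidableEq m] (A : Matrix m m ℝ) : Prop :=
  ∃ (s : ℝ) (N : Matrix m m ℝ),
    0 < s ∧ (∀ i j, 0 ≤ N i j) ∧ A = s • (1 : Matrix m m ℝ) - N ∧
    ∀ μ ∈ spectrum ℂ (N.map (algebraMap ℝ ℂ)), ‖μ‖ < s

open Kronecker

/-- The vec-permutation matrix `Π = Σ_{i,j} E_{i,j} ⊗ E_{j,i}`, where `E_{i,j}` is the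
matrix with `(i,j)` entry `1` and zeros elsewhere. -/
def vecPerm (n : ℕ) : Matrix (Fin n × Fin n) (Fin n × Fin n) ℝ :=
  ∑ i : Fin n, ∑ j : Fin n,
    (Matrix.single i j (1 : ℝ)) ⊗ₖ (Matrix.single j i (1 : ℝ))

/-- Column-stacking vectorization: `vecM X (j, i) = X i j`. -/
def vecM {n : ℕ} (X : Matrix (Fin n) (Fin n) ℝ) : Fin n × Fin n → ℝ := fun p => X p.2 p.1

section MMatrixAux

open Filter

set_option linter.unusedSectionVars false

attribute [local instance] Matrix.linftyOpNormedRing Matrix.linftyOpNormedAlgebra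

variable {m : Type*} [Fintype m] [DecidableEq m]

private lemma entry_nnnorm_le (Q : Matrix m m ℝ) (i j : m) : ‖Q i j‖₊ ≤ ‖Q‖₊ := by
  rw [Matrix.linfty_opNNNorm_def]
  refine le_trans (Finset.single_le_sum (f := fun j => ‖Q i j‖₊) (fun _ _ => zero_le)
    (Finset.mem_univ j)) (Finset.le_sup (f := fun i => ∑ j, ‖Q i j‖₊) (Finset.mem_univ i))

private lemma mul_entries_nonneg {P Q : Matrix m m ℝ} (hP : ∀ i j, 0 ≤ P i j)
    (hQ : ∀ i j, 0 ≤ Q i j) : ∀ i j, 0 ≤ (P * Q) i j := by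
  intro i j
  rw [Matrix.mul_apply]
  exact Finset.sum_nonneg fun l _ => mul_nonneg (hP i l) (hQ l j)

private lemma pow_entries_nonneg {P : Matrix m m ℝ} (hP : ∀ i j, 0 ≤ P i j) (k : ℕ) :
    ∀ i j, 0 ≤ (P ^ k) i j := by
  induction k with
  | zero => intro i j; simp [Matrix.one_apply]; positivity
  | succ k ih => rw [pow_succ]; exact mul_entries_nonneg ih hP

private lemma nnnorm_map_complex (Q : Matrix m m ℝ) : ‖Q.map (algebraMap ℝ ℂ)‖₊ = ‖Q‖₊ := by
  rw [Matrix.linfty_opNNNorm_def, Matrix.linfty_opNNNorm_def]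
  congr 1; funext i; congr 1; funext j
  simp only [Matrix.map_apply]
  ext
  simp

/-- A nonsingular M-matrix is inverse-positive: `M v ≥ 0` implies `v ≥ 0`. -/
private lemma mmatrix_key {M : Matrix m m ℝ} (hM : IsNonsingMMatrix M) {v : m → ℝ}
    (h : ∀ p, 0 ≤ M.mulVec v p) : ∀ p, 0 ≤ v p := by
  obtain ⟨s, N, hs, hN, hMeq, hspec⟩ := hM
  cases isEmpty_or_nonempty m with
  | inl hE => exact fun p => (IsEmpty.false p).elim
  | inr hne =>
    haveI : CompleteSpace (Matrix m m ℂ) := FiniteDimensional.complete ℂ _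
    set Nc := N.map (algebraMap ℝ ℂ) with hNc
    have hρ : spectralRadius ℂ Nc < (s.toNNReal : NNReal) := by
      apply spectrum.spectralRadius_lt_of_forall_lt
      intro z hz
      have := hspec z hz
      rw [← NNReal.coe_lt_coe, coe_nnnorm, Real.coe_toNNReal _ hs.le]
      exact this
    have hG := spectrum.pow_nnnorm_pow_one_div_tendsto_nhds_spectralRadius (A := Matrix m m ℂ) Nc
    have hev : ∀ᶠ k : ℕ in atTop, (‖Nc ^ k‖₊ : ENNReal) ^ (1 / (k : ℝ)) < (s.toNNReal : NNReal) :=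
      hG.eventually_lt_const hρ
    obtain ⟨k, hk1, hklt⟩ := ((eventually_ge_atTop 1).and hev).exists
    have hkne : (k : ℝ) ≠ 0 := Nat.cast_ne_zero.mpr (by omega)
    have hNk : ‖N ^ k‖₊ < s.toNNReal ^ k := by
      have h1 : ((‖Nc ^ k‖₊ : ENNReal) ^ (1 / (k : ℝ))) ^ (k : ℝ)
          < ((s.toNNReal : ENNReal)) ^ (k : ℝ) := by
        apply ENNReal.rpow_lt_rpow hklt
        positivity
      rw [← ENNReal.rpow_mul, one_div, inv_mul_cancel₀ hkne, ENNReal.rpow_one,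
        ENNReal.rpow_natCast] at h1
      have h2 : Nc ^ k = (N ^ k).map (algebraMap ℝ ℂ) := by
        rw [hNc, ← RingHom.mapMatrix_apply, ← RingHom.mapMatrix_apply, ← map_pow]
      rw [h2, nnnorm_map_complex, ← ENNReal.coe_pow, ENNReal.coe_lt_coe] at h1
      exact h1
    have hNkR : ‖N ^ k‖ < s ^ k := by
      have := (NNReal.coe_lt_coe).mpr hNk
      rwa [coe_nnnorm, NNReal.coe_pow, Real.coe_toNNReal _ hs.le] at this
    set P : Matrix m m ℝ := s⁻¹ • N with hPdef
    have hP : ∀ i j, 0 ≤ P i j := fun i j => by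
      simp only [hPdef, Matrix.smul_apply, smul_eq_mul]
      exact mul_nonneg (inv_nonneg.mpr hs.le) (hN i j)
    have hPk : ‖P ^ k‖ < 1 := by
      rw [hPdef, smul_pow, norm_smul, norm_pow, Real.norm_eq_abs, abs_inv, abs_of_pos hs]
      rw [inv_pow]
      calc (s ^ k)⁻¹ * ‖N ^ k‖ < (s ^ k)⁻¹ * s ^ k :=
            (mul_lt_mul_iff_right₀ (by positivity)).mpr hNkR
        _ = 1 := inv_mul_cancel₀ (by positivity)
    have hMP : M = s • ((1 : Matrix m m ℝ) - P) := by
      rw [hMeq, smul_sub, hPdef, smul_smul, mul_inv_cancel₀ hs.ne', one_smul]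
    have hw' : ∀ p, 0 ≤ ((1 - P).mulVec v) p := by
      intro p
      have h1 : M.mulVec v p = s * ((1 - P).mulVec v) p := by
        rw [hMP, Matrix.smul_mulVec]; rfl
      have := h p
      rw [h1] at this
      exact nonneg_of_mul_nonneg_right this hs
    have hkey : ∀ t p, ((P ^ t).mulVec v) p ≤ v p := by
      intro t p
      have hgeom : (∑ i ∈ Finset.range t, P ^ i) * (1 - P) = 1 - P ^ t := by
        calc (∑ i ∈ Finset.range t, P ^ i) * (1 - P)
            = -((∑ i ∈ Finset.range t, P ^ i) * (P - 1)) := by rw [← mul_neg, neg_sub]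
          _ = -(P ^ t - 1) := by rw [geom_sum_mul]
          _ = 1 - P ^ t := neg_sub _ _
      have h2 : ((∑ i ∈ Finset.range t, P ^ i).mulVec ((1 - P).mulVec v)) p
          = v p - ((P ^ t).mulVec v) p := by
        rw [Matrix.mulVec_mulVec, hgeom, Matrix.sub_mulVec, Matrix.one_mulVec]
        rfl
      have h3 : 0 ≤ ((∑ i ∈ Finset.range t, P ^ i).mulVec ((1 - P).mulVec v)) p := by
        unfold Matrix.mulVec dotProduct
        apply Finset.sum_nonneg
        intro j _
        refine mul_nonneg ?_ (hw' j)
        show 0 ≤ (∑ i ∈ Finset.range t, P ^ i) p j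
        rw [Matrix.sum_apply]
        exact Finset.sum_nonneg fun i _ => pow_entries_nonneg hP i p j
      linarith [h2 ▸ h3]
    intro p
    have hC : ∀ (Q : Matrix m m ℝ), |(Q.mulVec v) p| ≤ ‖Q‖ * ∑ j, |v j| := by
      intro Q
      calc |(Q.mulVec v) p| = |∑ j, Q p j * v j| := rfl
        _ ≤ ∑ j, |Q p j * v j| := Finset.abs_sum_le_sum_abs _ _
        _ ≤ ∑ j, ‖Q‖ * |v j| := by
            apply Finset.sum_le_sum
            intro j _
            rw [abs_mul]
            apply mul_le_mul_of_nonneg_right _ (abs_nonneg _)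
            have := entry_nnnorm_le Q p j
            rw [← NNReal.coe_le_coe, coe_nnnorm, coe_nnnorm, Real.norm_eq_abs] at this
            exact this
        _ = ‖Q‖ * ∑ j, |v j| := by rw [Finset.mul_sum]
    have htend : Tendsto (fun t : ℕ => (((P ^ k) ^ t).mulVec v) p) atTop (nhds 0) := by
      refine squeeze_zero_norm' (a := fun t : ℕ => ‖P ^ k‖ ^ t * ∑ j, |v j|) ?_ ?_
      · filter_upwards [eventually_ge_atTop 1] with t ht
        refine le_trans (hC _) (mul_le_mul_of_nonneg_right ?_
          (Finset.sum_nonneg fun _ _ => abs_nonneg _))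
        exact norm_pow_le' _ (by omega)
      · rw [← zero_mul (∑ j, |v j|)]
        exact (tendsto_pow_atTop_nhds_zero_of_norm_lt_one
          (by rwa [norm_norm])).mul_const _
    have hle : ∀ t : ℕ, (((P ^ k) ^ t).mulVec v) p ≤ v p := by
      intro t; rw [← pow_mul]; exact hkey (k * t) p
    exact le_of_tendsto htend (Eventually.of_forall hle)

end MMatrixAux

section VecAux

lemma vecPerm_apply {n : ℕ} (a b c d : Fin n) :
    vecPerm n (a, b) (c, d) = if c = b ∧ d = a then 1 else 0 := by
  simp only [vecPerm, Matrix.sum_apply, Matrix.kroneckerMap_apply, Matrix.single,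
    Matrix.of_apply]
  simp [ite_and, Finset.sum_ite_eq, Finset.sum_ite_eq', eq_comm, and_comm]

lemma vecPerm_mulVec {n : ℕ} (u : Fin n × Fin n → ℝ) (p : Fin n × Fin n) :
    (vecPerm n).mulVec u p = u (p.2, p.1) := by
  obtain ⟨a, b⟩ := p
  simp only [Matrix.mulVec, dotProduct]
  rw [Fintype.sum_prod_type]
  simp [vecPerm_apply, ite_and, Finset.sum_ite_eq, Finset.sum_ite_eq']

lemma oneKron_mulVec {n : ℕ} (D X : Matrix (Fin n) (Fin n) ℝ) :
    ((1 : Matrix (Fin n) (Fin n) ℝ) ⊗ₖ D).mulVec (vecM X) = vecM (D * X) := by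
  funext p
  obtain ⟨j, i⟩ := p
  simp only [Matrix.mulVec, dotProduct, Matrix.kroneckerMap_apply, vecM,
    Matrix.mul_apply, Matrix.one_apply]
  rw [Fintype.sum_prod_type]
  simp [Finset.sum_ite_eq, mul_comm]

lemma kronOne_mulVec {n : ℕ} (A Z : Matrix (Fin n) (Fin n) ℝ) :
    (Aᵀ ⊗ₖ (1 : Matrix (Fin n) (Fin n) ℝ)).mulVec (vecM Z) = vecM (Z * A) := by
  funext p
  obtain ⟨j, i⟩ := p
  simp only [Matrix.mulVec, dotProduct, Matrix.kroneckerMap_apply, vecM,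
    Matrix.mul_apply, Matrix.one_apply, Matrix.transpose_apply]
  rw [Fintype.sum_prod_type]
  simp [Finset.sum_ite_eq, mul_comm]

lemma vec_ST {n : ℕ} (A D X : Matrix (Fin n) (Fin n) ℝ) :
    ((1 : Matrix (Fin n) (Fin n) ℝ) ⊗ₖ D
      + (Aᵀ ⊗ₖ (1 : Matrix (Fin n) (Fin n) ℝ)) * vecPerm n).mulVec (vecM X)
    = vecM (D * X + Xᵀ * A) := by
  rw [Matrix.add_mulVec, ← Matrix.mulVec_mulVec]
  have h1 : (vecPerm n).mulVec (vecM X) = vecM Xᵀ := by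
    funext p; rw [vecPerm_mulVec]; rfl
  rw [h1, oneKron_mulVec, kronOne_mulVec]
  funext p
  simp [vecM, Matrix.add_apply]

end VecAux

/-- Under Assumption 1, if there exists a nonnegative matrix `Y` with `R_T(Y) ≥ 0`
entrywise, then the fixed-point iterates `X 0 = 0`,
`D * X (k+1) + (X (k+1))ᵀ * A = (X k)ᵀ * B * X k - C` satisfy `X k ≤ Y` entrywise. -/
theorem fixedPoint_iterates_le_supersolution
    {n : ℕ} (A B C D : Matrix (Fin n) (Fin n) ℝ)
    (hB : ∀ i j, 0 ≤ B i j) (hC : ∀ i j, C i j ≤ 0)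
    (hM : IsNonsingMMatrix
      ((1 : Matrix (Fin n) (Fin n) ℝ) ⊗ₖ D
        + (Aᵀ ⊗ₖ (1 : Matrix (Fin n) (Fin n) ℝ)) * vecPerm n))
    (Y : Matrix (Fin n) (Fin n) ℝ) (hY : ∀ i j, 0 ≤ Y i j)
    (hRY : ∀ i j, 0 ≤ (D * Y + Yᵀ * A - Yᵀ * B * Y + C) i j)
    (X : ℕ → Matrix (Fin n) (Fin n) ℝ) (hX0 : X 0 = 0)
    (hrec : ∀ k, D * X (k + 1) + (X (k + 1))ᵀ * A = (X k)ᵀ * B * X k - C) :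
    ∀ k, ∀ i j, X k i j ≤ Y i j := by
  -- from the M-matrix property: if `S_T(Z)` is entrywise nonnegative then so is `Z`
  have key : ∀ Z : Matrix (Fin n) (Fin n) ℝ,
      (∀ i j, 0 ≤ (D * Z + Zᵀ * A) i j) → ∀ i j, 0 ≤ Z i j := by
    intro Z hZ i j
    have h1 : ∀ p, 0 ≤ (((1 : Matrix (Fin n) (Fin n) ℝ) ⊗ₖ D
        + (Aᵀ ⊗ₖ (1 : Matrix (Fin n) (Fin n) ℝ)) * vecPerm n).mulVec (vecM Z)) p := by
      intro p
      rw [vec_ST]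
      exact hZ p.2 p.1
    exact mmatrix_key hM h1 (j, i)
  -- strengthened induction: 0 ≤ X k ≤ Y entrywise
  have main : ∀ k, (∀ i j, 0 ≤ X k i j) ∧ (∀ i j, X k i j ≤ Y i j) := by
    intro k
    induction k with
    | zero => constructor <;> intro i j <;> simp [hX0] <;> exact hY i j
    | succ k ih =>
      obtain ⟨ih0, ihY⟩ := ih
      have hXk1 : ∀ i j, 0 ≤ X (k + 1) i j := by
        apply key
        rw [hrec k]
        intro i j
        have h2 : 0 ≤ ((X k)ᵀ * B * X k) i j := by
          rw [Matrix.mul_apply]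
          refine Finset.sum_nonneg fun l _ => mul_nonneg ?_ (ih0 l j)
          rw [Matrix.mul_apply]
          exact Finset.sum_nonneg fun t _ =>
            mul_nonneg (ih0 t i) (hB t l)
        simp only [Matrix.sub_apply]
        linarith [hC i j]
      have hBmono : ∀ i j, ((X k)ᵀ * B * X k) i j ≤ (Yᵀ * B * Y) i j := by
        intro i j
        rw [Matrix.mul_apply, Matrix.mul_apply]
        apply Finset.sum_le_sum
        intro l _
        rw [Matrix.mul_apply, Matrix.mul_apply]
        apply mul_le_mul
        · apply Finset.sum_le_sum
          intro t _
          exact mul_le_mul_of_nonneg_right (ihY t i) (hB t l)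
        · exact ihY l j
        · exact ih0 l j
        · apply Finset.sum_nonneg
          intro t _
          exact mul_nonneg (hY t i) (hB t l)
      have hup : ∀ i j, X (k + 1) i j ≤ Y i j := by
        have h4 : ∀ i j, 0 ≤ (Y - X (k + 1)) i j := by
          apply key
          have hid : D * (Y - X (k + 1)) + (Y - X (k + 1))ᵀ * A
              = (D * Y + Yᵀ * A) - (D * X (k + 1) + (X (k + 1))ᵀ * A) := by
            rw [Matrix.transpose_sub, Matrix.mul_sub, Matrix.sub_mul]
            abel
          rw [hid, hrec k]
          intro i j
          have := hRY i j
          have h5 := hBmono i j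
          simp only [Matrix.sub_apply, Matrix.add_apply] at this ⊢
          linarith
        intro i j
        have := h4 i j
        simp only [Matrix.sub_apply] at this
        linarith
      exact ⟨hXk1, hup⟩
  exact fun k => (main k).2
end

section
/- Under Assumption 1, if there exists a nonnegative matrix Y with R_T(Y) ≥ 0, then the fixed-point sequence X_0 = 0, X_{k+1} = S_T⁻¹(X_kᵀ B X_k − C) converges to a matrix X_min that is a solution of R_T(X) = 0 and is minimal among all nonnegative Y with R_T(Y) ≥ 0, i.e., X_min ≤ Y for every such Y. -/
open Matrix

open Kronecker

section AuxMMatrix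
set_option linter.unusedSectionVars false
variable {m : Type*} [Fintype m] [DecidableEq m]

lemma entry_norm_le_linfty (M : Matrix m m ℝ) (a b : m) :
    letI : NormedRing (Matrix m m ℝ) := Matrix.linftyOpNormedRing
    ‖M a b‖ ≤ ‖M‖ := by
  letI : NormedRing (Matrix m m ℝ) := Matrix.linftyOpNormedRing
  have h1 : ‖M a b‖₊ ≤ ∑ j, ‖M a j‖₊ :=
    Finset.single_le_sum (f := fun j => ‖M a j‖₊) (fun j _ => zero_le) (Finset.mem_univ b)
  have h2 : (∑ j, ‖M a j‖₊) ≤ Finset.univ.sup fun i : m => ∑ j, ‖M i j‖₊ :=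
    Finset.le_sup (f := fun i : m => ∑ j, ‖M i j‖₊) (Finset.mem_univ a)
  have := (h1.trans h2)
  rw [← Matrix.linfty_opNNNorm_def] at this
  exact_mod_cast this

lemma matrix_mul_nonneg {M N : Matrix m m ℝ} (hM : ∀ i j, 0 ≤ M i j) (hN : ∀ i j, 0 ≤ N i j) :
    ∀ i j, 0 ≤ (M * N) i j := fun i j =>
  Finset.sum_nonneg fun k _ => mul_nonneg (hM i k) (hN k j)

lemma matrix_pow_nonneg {M : Matrix m m ℝ} (hM : ∀ i j, 0 ≤ M i j) :
    ∀ k, ∀ i j, 0 ≤ (M ^ k) i j := by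
  intro k
  induction k with
  | zero => intro i j; simp [Matrix.one_apply]; positivity
  | succ k ih => rw [pow_succ]; exact matrix_mul_nonneg ih hM

/-- A nonsingular M-matrix has an entrywise nonnegative (two-sided) inverse. -/
theorem IsNonsingMMatrix.exists_nonneg_inv {M : Matrix m m ℝ} (h : IsNonsingMMatrix M) :
    ∃ W : Matrix m m ℝ, M * W = 1 ∧ W * M = 1 ∧ ∀ i j, 0 ≤ W i j := by
  obtain ⟨s, N, hs, hN, hMeq, hspec⟩ := h
  letI : NormedRing (Matrix m m ℝ) := Matrix.linftyOpNormedRing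
  letI : NormedAlgebra ℝ (Matrix m m ℝ) := Matrix.linftyOpNormedAlgebra
  letI : NormedRing (Matrix m m ℂ) := Matrix.linftyOpNormedRing
  letI : NormedAlgebra ℂ (Matrix m m ℂ) := Matrix.linftyOpNormedAlgebra
  set P : Matrix m m ℝ := s⁻¹ • N with hP
  have hPnn : ∀ i j, 0 ≤ P i j := fun i j => by
    have := hN i j
    simp only [hP, Matrix.smul_apply, smul_eq_mul]
    positivity
  set Pc : Matrix m m ℂ := P.map (algebraMap ℝ ℂ) with hPc
  have hs' : ((s : ℂ))⁻¹ ≠ 0 := by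
    simp only [ne_eq, inv_eq_zero, Complex.ofReal_eq_zero]
    exact hs.ne'
  have hPc_smul : Pc = (Units.mk0 ((s:ℂ))⁻¹ hs') • N.map (algebraMap ℝ ℂ) := by
    ext i j
    simp [hPc, hP, Matrix.map_apply, Matrix.smul_apply, smul_eq_mul, Units.smul_def]
  -- spectrum of Pc lies in the open unit ball
  have hspecP : ∀ μ ∈ spectrum ℂ Pc, ‖μ‖₊ < 1 := by
    intro μ hμ
    rw [hPc_smul, spectrum.unit_smul_eq_smul] at hμ
    obtain ⟨ν, hν, rfl⟩ := hμ
    have hins := hspec ν hν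
    have hlt : ‖(Units.mk0 ((s:ℂ))⁻¹ hs' : ℂˣ) • ν‖ < 1 := by
      have habs : ‖(Units.mk0 ((s:ℂ))⁻¹ hs' : ℂˣ) • ν‖ = s⁻¹ * ‖ν‖ := by
        simp only [Units.smul_def, smul_eq_mul, Units.val_mk0, norm_mul, norm_inv,
          Complex.norm_real, Real.norm_eq_abs]
        rw [abs_of_pos hs]
      rw [habs]
      have := mul_lt_mul_of_pos_left hins (inv_pos.mpr hs)
      rwa [inv_mul_cancel₀ hs.ne'] at this
    show ‖(Units.mk0 ((s:ℂ))⁻¹ hs' : ℂˣ) • ν‖₊ < 1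
    exact_mod_cast hlt
  -- spectral radius < 1
  have hrad : spectralRadius ℂ Pc < 1 := by
    rcases Set.eq_empty_or_nonempty (spectrum ℂ Pc) with he | hne
    · rw [spectralRadius, he]
      simp
    · obtain ⟨μ₀, hμ₀, hmax⟩ :=
        (spectrum.isCompact Pc).exists_isMaxOn hne
          (continuous_nnnorm.continuousOn (s := spectrum ℂ Pc))
      have hle : spectralRadius ℂ Pc ≤ (‖μ₀‖₊ : ENNReal) := by
        rw [spectralRadius]
        exact iSup₂_le fun μ hμ => by exact_mod_cast hmax hμ
      exact lt_of_le_of_lt hle (by exact_mod_cast hspecP μ₀ hμ₀)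
  -- Gelfand's formula: find k ≥ 1 with ‖Pc ^ k‖₊ < 1
  obtain ⟨k, hk1, hklt⟩ : ∃ k, 1 ≤ k ∧ ‖Pc ^ k‖₊ < 1 := by
    have hG := spectrum.pow_nnnorm_pow_one_div_tendsto_nhds_spectralRadius Pc
    have hev := (hG.eventually_lt_const hrad).and (Filter.eventually_ge_atTop 1)
    obtain ⟨k, hklt, hk1⟩ := hev.exists
    refine ⟨k, hk1, ?_⟩
    by_contra hcon
    push_neg at hcon
    have h1 : (1 : ENNReal) ≤ (‖Pc ^ k‖₊ : ENNReal) := by exact_mod_cast hcon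
    have hpow : (1 : ENNReal) ≤ (‖Pc ^ k‖₊ : ENNReal) ^ (1 / (k : ℝ)) := by
      calc (1 : ENNReal) = 1 ^ (1 / (k : ℝ)) := (ENNReal.one_rpow _).symm
      _ ≤ _ := ENNReal.rpow_le_rpow h1 (by positivity)
    exact absurd hklt (not_lt.mpr hpow)
  -- transfer to the real matrix P
  have hnorm_eq : ‖Pc ^ k‖₊ = ‖P ^ k‖₊ := by
    have hmap : Pc ^ k = (P ^ k).map (algebraMap ℝ ℂ) := by
      rw [hPc]
      exact (map_pow ((algebraMap ℝ ℂ).mapMatrix) P k).symm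
    rw [hmap, Matrix.linfty_opNNNorm_def, Matrix.linfty_opNNNorm_def]
    congr 1
    funext i
    congr 1
    funext j
    simp [Matrix.map_apply]
  have hQlt : ‖P ^ k‖ < 1 := by
    have : ‖P ^ k‖₊ < 1 := hnorm_eq ▸ hklt
    exact_mod_cast this
  -- geometric series for Q = P ^ k
  set Q : Matrix m m ℝ := P ^ k with hQ
  have hQnn : ∀ i j, 0 ≤ Q i j := matrix_pow_nonneg hPnn k
  set u : (Matrix m m ℝ)ˣ := Units.oneSub Q hQlt with hu
  set t : Matrix m m ℝ := ∑' n : ℕ, Q ^ n with ht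
  have hui : (↑u⁻¹ : Matrix m m ℝ) = t := rfl
  -- entry evaluation is 1-Lipschitz hence continuous
  have hentry : ∀ a b : m, Continuous (fun M : Matrix m m ℝ => M a b) := by
    intro a b
    refine (LipschitzWith.of_dist_le_mul (K := 1) fun M N => ?_).continuous
    rw [NNReal.coe_one, one_mul, dist_eq_norm, dist_eq_norm]
    have : M a b - N a b = (M - N) a b := by simp [Matrix.sub_apply]
    rw [this]
    exact entry_norm_le_linfty (M - N) a b
  have htnn : ∀ a b, 0 ≤ t a b := by
    intro a b
    have hsum : HasSum (fun n : ℕ => Q ^ n) t :=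
      (summable_geometric_of_norm_lt_one hQlt).hasSum
    have htend := ((hentry a b).tendsto t).comp hsum.tendsto_sum_nat
    refine ge_of_tendsto htend (Filter.Eventually.of_forall fun K => ?_)
    show 0 ≤ (∑ i ∈ Finset.range K, Q ^ i) a b
    rw [Matrix.sum_apply]
    exact Finset.sum_nonneg fun i _ => matrix_pow_nonneg hQnn i a b
  set G : Matrix m m ℝ := ∑ i ∈ Finset.range k, P ^ i with hG
  have hGnn : ∀ a b, 0 ≤ G a b := by
    intro a b
    rw [hG, Matrix.sum_apply]
    exact Finset.sum_nonneg fun i _ => matrix_pow_nonneg hPnn i a b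
  have hgeom : ((1 : Matrix m m ℝ) - P) * G = 1 - Q := by
    have h := mul_geom_sum P k
    calc ((1 : Matrix m m ℝ) - P) * G = -((P - 1) * G) := by rw [← neg_mul, neg_sub]
    _ = -(P ^ k - 1) := by rw [hG, h]
    _ = 1 - Q := by rw [neg_sub, hQ]
  set W0 : Matrix m m ℝ := G * t with hW0
  have hW0nn : ∀ a b, 0 ≤ W0 a b := matrix_mul_nonneg hGnn htnn
  have h1 : ((1 : Matrix m m ℝ) - P) * W0 = 1 := by
    rw [hW0, ← mul_assoc, hgeom, ← hui]
    have : ((1 : Matrix m m ℝ) - Q) = ↑u := rfl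
    rw [this, u.mul_inv]
  have h2 : W0 * ((1 : Matrix m m ℝ) - P) = 1 := mul_eq_one_comm.mp h1
  have hM2 : M = s • ((1 : Matrix m m ℝ) - P) := by
    rw [hMeq, smul_sub, hP, smul_smul, mul_inv_cancel₀ hs.ne', one_smul]
  refine ⟨s⁻¹ • W0, ?_, ?_, ?_⟩
  · simp only [hM2, Matrix.smul_mul, Matrix.mul_smul, smul_smul, h1,
      mul_inv_cancel₀ hs.ne', inv_mul_cancel₀ hs.ne', one_smul]
  · simp only [hM2, Matrix.smul_mul, Matrix.mul_smul, smul_smul, h2,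
      mul_inv_cancel₀ hs.ne', inv_mul_cancel₀ hs.ne', one_smul]
  · intro i j
    have := hW0nn i j
    simp only [Matrix.smul_apply, smul_eq_mul]
    positivity

end AuxMMatrix

section AuxVec
variable {n : ℕ}

lemma vecPerm_mulVec_s8 (U : Matrix (Fin n) (Fin n) ℝ) :
    vecPerm n *ᵥ vecM U = vecM Uᵀ := by
  ext p
  simp only [vecPerm, Matrix.mulVec, dotProduct, vecM, Matrix.sum_apply,
    Matrix.kroneckerMap_apply, Matrix.single, Matrix.of_apply,
    Fintype.sum_prod_type, Matrix.transpose_apply]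
  simp [Finset.sum_ite_eq, Finset.sum_ite_eq', ite_and, Finset.sum_comm (γ := Fin n),
    mul_comm, mul_assoc, mul_ite, ite_mul]

lemma kron_one_D_mulVec (D U : Matrix (Fin n) (Fin n) ℝ) :
    ((1 : Matrix (Fin n) (Fin n) ℝ) ⊗ₖ D) *ᵥ vecM U = vecM (D * U) := by
  ext p
  simp only [Matrix.mulVec, dotProduct, vecM, Matrix.kroneckerMap_apply,
    Fintype.sum_prod_type, Matrix.one_apply, Matrix.mul_apply, ite_mul, one_mul, zero_mul]
  rw [Finset.sum_comm]
  simp [Finset.sum_ite_eq]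

lemma kron_A_one_mulVec (A V : Matrix (Fin n) (Fin n) ℝ) :
    ((Aᵀ ⊗ₖ (1 : Matrix (Fin n) (Fin n) ℝ))) *ᵥ vecM V = vecM (V * A) := by
  ext p
  simp only [Matrix.mulVec, dotProduct, vecM, Matrix.kroneckerMap_apply,
    Fintype.sum_prod_type, Matrix.one_apply, Matrix.mul_apply, Matrix.transpose_apply,
    mul_ite, mul_one, mul_zero]
  simp [Finset.sum_ite_eq, Finset.sum_ite_eq', mul_comm]

/-- Vectorization of the linear operator `U ↦ D U + Uᵀ A`. -/
lemma vec_linear (A D U : Matrix (Fin n) (Fin n) ℝ) :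
    ((1 : Matrix (Fin n) (Fin n) ℝ) ⊗ₖ D
      + (Aᵀ ⊗ₖ (1 : Matrix (Fin n) (Fin n) ℝ)) * vecPerm n) *ᵥ vecM U
    = vecM (D * U + Uᵀ * A) := by
  rw [Matrix.add_mulVec, ← Matrix.mulVec_mulVec, vecPerm_mulVec_s8, kron_one_D_mulVec,
    kron_A_one_mulVec]
  ext p
  simp [vecM, Matrix.add_apply]

/-- The key inverse-positivity property: if `S_T(U) ≥ 0` entrywise then `U ≥ 0` entrywise. -/
lemma nonneg_of_S_nonneg (A D : Matrix (Fin n) (Fin n) ℝ)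
    (hM : IsNonsingMMatrix
      ((1 : Matrix (Fin n) (Fin n) ℝ) ⊗ₖ D
        + (Aᵀ ⊗ₖ (1 : Matrix (Fin n) (Fin n) ℝ)) * vecPerm n))
    (U : Matrix (Fin n) (Fin n) ℝ) (h : ∀ i j, 0 ≤ (D * U + Uᵀ * A) i j) :
    ∀ i j, 0 ≤ U i j := by
  obtain ⟨W, hMW, hWM, hWnn⟩ := hM.exists_nonneg_inv
  have hv : vecM U = W *ᵥ vecM (D * U + Uᵀ * A) := by
    rw [← vec_linear A D U, Matrix.mulVec_mulVec, hWM, Matrix.one_mulVec]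
  intro i j
  have : vecM U (j, i) = U i j := rfl
  rw [← this, hv]
  exact Finset.sum_nonneg fun q _ => mul_nonneg (hWnn _ _) (h q.2 q.1)

end AuxVec

/-- Under Assumption 1, if some nonnegative `Y` satisfies `R_T(Y) ≥ 0` entrywise, then
the fixed-point sequence `X 0 = 0`, `D * X (k+1) + (X (k+1))ᵀ * A = (X k)ᵀ * B * X k - C`
converges to a matrix `Xmin` solving `R_T(Xmin) = 0` which is minimal among all
nonnegative supersolutions. -/
theorem fixedPoint_tendsto_minimal_solution
    {n : ℕ} (A B C D : Matrix (Fin n) (Fin n) ℝ)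
    (hB : ∀ i j, 0 ≤ B i j) (hC : ∀ i j, C i j ≤ 0)
    (hM : IsNonsingMMatrix
      ((1 : Matrix (Fin n) (Fin n) ℝ) ⊗ₖ D
        + (Aᵀ ⊗ₖ (1 : Matrix (Fin n) (Fin n) ℝ)) * vecPerm n))
    (Y : Matrix (Fin n) (Fin n) ℝ) (hY : ∀ i j, 0 ≤ Y i j)
    (hRY : ∀ i j, 0 ≤ (D * Y + Yᵀ * A - Yᵀ * B * Y + C) i j)
    (X : ℕ → Matrix (Fin n) (Fin n) ℝ) (hX0 : X 0 = 0)
    (hrec : ∀ k, D * X (k + 1) + (X (k + 1))ᵀ * A = (X k)ᵀ * B * X k - C) :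
    ∃ Xmin : Matrix (Fin n) (Fin n) ℝ,
      Filter.Tendsto X Filter.atTop (nhds Xmin) ∧
      D * Xmin + Xminᵀ * A - Xminᵀ * B * Xmin + C = 0 ∧
      ∀ Z : Matrix (Fin n) (Fin n) ℝ, (∀ i j, 0 ≤ Z i j) →
        (∀ i j, 0 ≤ (D * Z + Zᵀ * A - Zᵀ * B * Z + C) i j) →
        ∀ i j, Xmin i j ≤ Z i j := by
  have key := nonneg_of_S_nonneg A D hM
  -- linearity of S
  have hSsub : ∀ U V : Matrix (Fin n) (Fin n) ℝ,
      D * (U - V) + (U - V)ᵀ * A = (D * U + Uᵀ * A) - (D * V + Vᵀ * A) := by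
    intro U V
    rw [Matrix.mul_sub, Matrix.transpose_sub, Matrix.sub_mul]
    abel
  -- monotonicity of the quadratic form
  have hquad : ∀ V V' : Matrix (Fin n) (Fin n) ℝ, (∀ i j, 0 ≤ V i j) →
      (∀ i j, V i j ≤ V' i j) → ∀ i j, (Vᵀ * B * V) i j ≤ (V'ᵀ * B * V') i j := by
    intro V V' hV hle i j
    have hd : V'ᵀ * B * V' - Vᵀ * B * V = V'ᵀ * B * (V' - V) + (V' - V)ᵀ * B * V := by
      rw [Matrix.mul_sub, Matrix.transpose_sub, Matrix.sub_mul, Matrix.sub_mul]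
      abel
    have hV' : ∀ a b, 0 ≤ V' a b := fun a b => le_trans (hV a b) (hle a b)
    have hVV' : ∀ a b, 0 ≤ (V' - V) a b := fun a b => by
      simp only [Matrix.sub_apply, sub_nonneg]; exact hle a b
    have hnn : 0 ≤ (V'ᵀ * B * V' - Vᵀ * B * V) i j := by
      rw [hd]
      have l1 := matrix_mul_nonneg
        (matrix_mul_nonneg (fun a b => hV' b a) hB) hVV' i j
      have l2 := matrix_mul_nonneg
        (matrix_mul_nonneg (fun a b => hVV' b a) hB) hV i j
      have : (V'ᵀ * B * (V' - V) + (V' - V)ᵀ * B * V) i j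
          = (V'ᵀ * B * (V' - V)) i j + ((V' - V)ᵀ * B * V) i j := rfl
      rw [this]
      · positivity
    have : (V'ᵀ * B * V' - Vᵀ * B * V) i j
        = (V'ᵀ * B * V') i j - (Vᵀ * B * V) i j := rfl
    linarith [this ▸ hnn]
  -- the chain 0 ≤ X k ≤ X (k+1)
  have hchain : ∀ k, (∀ i j, 0 ≤ X k i j) ∧ (∀ i j, X k i j ≤ X (k + 1) i j) := by
    intro k
    induction k with
    | zero =>
      have hS1 : ∀ i j, 0 ≤ (D * X 1 + (X 1)ᵀ * A) i j := by
        rw [hrec 0, hX0]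
        intro i j
        simp only [Matrix.transpose_zero, Matrix.zero_mul, Matrix.mul_zero, zero_sub,
          Matrix.neg_apply, Left.nonneg_neg_iff]
        exact hC i j
      have h1 := key (X 1) hS1
      refine ⟨by simp [hX0], fun i j => ?_⟩
      rw [hX0]
      exact h1 i j
    | succ k ih =>
      have hXk1 : ∀ i j, 0 ≤ X (k + 1) i j := fun i j => le_trans (ih.1 i j) (ih.2 i j)
      refine ⟨hXk1, ?_⟩
      have hS : D * (X (k + 2) - X (k + 1)) + (X (k + 2) - X (k + 1))ᵀ * A
          = (X (k + 1))ᵀ * B * X (k + 1) - (X k)ᵀ * B * X k := by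
        rw [hSsub, hrec (k + 1), hrec k]
        abel
      have hpos := key (X (k + 2) - X (k + 1)) (by
        rw [hS]
        intro i j
        have := hquad (X k) (X (k + 1)) ih.1 ih.2 i j
        simp only [Matrix.sub_apply, sub_nonneg]
        exact this)
      intro i j
      have := hpos i j
      simp only [Matrix.sub_apply, sub_nonneg] at this
      exact this
  -- every nonnegative supersolution dominates the whole sequence
  have hbound : ∀ Z : Matrix (Fin n) (Fin n) ℝ, (∀ i j, 0 ≤ Z i j) →
      (∀ i j, 0 ≤ (D * Z + Zᵀ * A - Zᵀ * B * Z + C) i j) →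
      ∀ k i j, X k i j ≤ Z i j := by
    intro Z hZ hRZ k
    induction k with
    | zero => intro i j; rw [hX0]; exact hZ i j
    | succ k ih =>
      have hS : D * (Z - X (k + 1)) + (Z - X (k + 1))ᵀ * A
          = (D * Z + Zᵀ * A) - ((X k)ᵀ * B * X k - C) := by
        rw [hSsub, hrec k]
      have hpos := key (Z - X (k + 1)) (by
        rw [hS]
        intro i j
        have h1 := hRZ i j
        have h2 := hquad (X k) Z (hchain k).1 ih i j
        simp only [Matrix.sub_apply, Matrix.add_apply] at h1 h2 ⊢
        linarith)
      intro i j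
      have := hpos i j
      simp only [Matrix.sub_apply, sub_nonneg] at this
      exact this
  -- entrywise monotone convergence
  have hmono : ∀ i j, Monotone fun k => X k i j := fun i j =>
    monotone_nat_of_le_succ fun k => (hchain k).2 i j
  have hbd : ∀ i j, BddAbove (Set.range fun k => X k i j) := fun i j =>
    ⟨Y i j, by rintro x ⟨k, rfl⟩; exact hbound Y hY hRY k i j⟩
  set Xmin : Matrix (Fin n) (Fin n) ℝ := Matrix.of fun i j => ⨆ k, X k i j with hXmin
  have htij : ∀ i j, Filter.Tendsto (fun k => X k i j) Filter.atTop (nhds (Xmin i j)) :=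
    fun i j => tendsto_atTop_ciSup (hmono i j) (hbd i j)
  have hT : Filter.Tendsto X Filter.atTop (nhds Xmin) := by
    refine tendsto_pi_nhds.mpr fun i => ?_
    rw [tendsto_pi_nhds]
    intro j
    exact htij i j
  refine ⟨Xmin, hT, ?_, ?_⟩
  · -- the limit solves the equation
    have hT1 : Filter.Tendsto (fun k => X (k + 1)) Filter.atTop (nhds Xmin) :=
      hT.comp (Filter.tendsto_add_atTop_nat 1)
    have hcontF : Continuous fun U : Matrix (Fin n) (Fin n) ℝ => D * U + Uᵀ * A :=
      (continuous_const.matrix_mul continuous_id).add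
        ((continuous_id.matrix_transpose).matrix_mul continuous_const)
    have hcontG : Continuous fun U : Matrix (Fin n) (Fin n) ℝ => Uᵀ * B * U - C :=
      (((continuous_id.matrix_transpose).matrix_mul continuous_const).matrix_mul
        continuous_id).sub continuous_const
    have hL1 : Filter.Tendsto (fun k => D * X (k + 1) + (X (k + 1))ᵀ * A)
        Filter.atTop (nhds (D * Xmin + Xminᵀ * A)) :=
      (hcontF.tendsto Xmin).comp hT1
    have hL2 : Filter.Tendsto (fun k => (X k)ᵀ * B * X k - C)
        Filter.atTop (nhds (Xminᵀ * B * Xmin - C)) :=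
      (hcontG.tendsto Xmin).comp hT
    have heqseq : (fun k => D * X (k + 1) + (X (k + 1))ᵀ * A)
        = fun k => (X k)ᵀ * B * X k - C := funext hrec
    rw [heqseq] at hL1
    have heq := tendsto_nhds_unique hL1 hL2
    rw [heq]
    abel
  · -- minimality
    intro Z hZ hRZ i j
    exact ciSup_le fun k => hbound Z hZ hRZ k i j
end
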